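/- The eigenvalues of the symmetric matrix BBᵀ (the pinned Laplacian of the path graph on N vertices, i.e., the tridiagonal matrix with diagonal (2, 2, …, 2, 1) and sub- and superdiagonal entries −1) are exactly the N numbers λ_i = 2(1 − cos((2i−1)π/(2N+1))) = 4 sin²((2i−1)π/(4N+2)) for i = 1, …, N. -/

import Mathlib

open Matrix MeasureTheory Real

/-- The N×N matrix with 1 on the diagonal and -1 on the first superdiagonal. -/
noncomputable def Bmat (N : ℕ) : Matrix (Fin N) (Fin N) ℝ :=
  Matrix.of fun i j => if j = i then 1 else if (j : ℕ) = (i : ℕ) + 1 then -1 else 0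

/-- Entrywise absolute value of `Bmat N`. -/
noncomputable def absB (N : ℕ) : Matrix (Fin N) (Fin N) ℝ :=
  Matrix.of fun i j => |Bmat N i j|

/-- Euclidean norm of a vector in ℝ^N. -/
noncomputable def norm2 {N : ℕ} (x : Fin N → ℝ) : ℝ := Real.sqrt (x ⬝ᵥ x)

/-- The Hamiltonian H(p, Δ) = ½(p − v₀M𝟙)ᵀ M⁻¹ (p − v₀M𝟙) + ½ Δᵀ A Δ. -/
noncomputable def Ham {N : ℕ} (v0 : ℝ) (m a : Fin N → ℝ) (p Δ : Fin N → ℝ) : ℝ :=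
  (1/2) * ((p - v0 • (Matrix.diagonal m *ᵥ fun _ => 1)) ⬝ᵥ
      (Matrix.diagonal (fun i => (m i)⁻¹) *ᵥ (p - v0 • (Matrix.diagonal m *ᵥ fun _ => 1)))) +
  (1/2) * (Δ ⬝ᵥ (Matrix.diagonal a *ᵥ Δ))

/-- `Bmat` acting on a vector. -/
lemma Bmat_mulVec {N : ℕ} (w : Fin N → ℝ) (k : Fin N) :
    (Bmat N *ᵥ w) k = w k - (if h : (k : ℕ) + 1 < N then w ⟨(k : ℕ) + 1, h⟩ else 0) := by
  have key : ∀ j : Fin N, Bmat N k j * w j =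
      (if j = k then w j else 0) + (if (j : ℕ) = (k : ℕ) + 1 then -(w j) else 0) := by
    intro j
    by_cases h1 : j = k
    · have h2 : ¬ ((j : ℕ) = (k : ℕ) + 1) := by subst h1; omega
      simp [Bmat, h1, h2]
    · by_cases h2 : (j : ℕ) = (k : ℕ) + 1 <;> simp [Bmat, h1, h2]
  rw [Matrix.mulVec, dotProduct]
  rw [Finset.sum_congr rfl fun j _ => key j, Finset.sum_add_distrib]
  rw [Finset.sum_ite_eq' Finset.univ k w, if_pos (Finset.mem_univ k)]
  congr 1
  by_cases h : (k : ℕ) + 1 < N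
  · rw [dif_pos h]
    have : ∀ j : Fin N, ((j : ℕ) = (k : ℕ) + 1) ↔ j = ⟨(k : ℕ) + 1, h⟩ := by
      intro j; constructor
      · intro hj; exact Fin.ext hj
      · intro hj; subst hj; rfl
    rw [Finset.sum_congr rfl fun j _ => by rw [if_congr (this j) rfl rfl]]
    rw [Finset.sum_ite_eq' Finset.univ (⟨(k : ℕ) + 1, h⟩ : Fin N) (fun j => -(w j)),
      if_pos (Finset.mem_univ _)]
  · rw [dif_neg h, neg_zero]
    refine Finset.sum_eq_zero fun j _ => if_neg ?_
    have := j.isLt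
    omega

/-- `(Bmat)ᵀ` acting on a vector. -/
lemma Bmat_transpose_mulVec {N : ℕ} (v : Fin N → ℝ) (k : Fin N) :
    ((Bmat N)ᵀ *ᵥ v) k = v k -
      (if 1 ≤ (k : ℕ) then v ⟨(k : ℕ) - 1, lt_of_le_of_lt (Nat.sub_le _ _) k.isLt⟩ else 0) := by
  have key : ∀ j : Fin N, (Bmat N)ᵀ k j * v j =
      (if j = k then v j else 0) + (if (k : ℕ) = (j : ℕ) + 1 then -(v j) else 0) := by
    intro j
    by_cases h1 : j = k
    · have h2 : ¬ ((k : ℕ) = (j : ℕ) + 1) := by subst h1; omega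
      simp [Bmat, Matrix.transpose_apply, h1, h2]
    · have h1' : ¬ (k = j) := fun h => h1 h.symm
      by_cases h2 : (k : ℕ) = (j : ℕ) + 1 <;>
        simp [Bmat, Matrix.transpose_apply, h1, h1', h2]
  rw [Matrix.mulVec, dotProduct]
  rw [Finset.sum_congr rfl fun j _ => key j, Finset.sum_add_distrib]
  rw [Finset.sum_ite_eq' Finset.univ k v, if_pos (Finset.mem_univ k)]
  congr 1
  by_cases h : 1 ≤ (k : ℕ)
  · rw [if_pos h]
    set j0 : Fin N := ⟨(k : ℕ) - 1, lt_of_le_of_lt (Nat.sub_le _ _) k.isLt⟩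
    have : ∀ j : Fin N, ((k : ℕ) = (j : ℕ) + 1) ↔ j = j0 := by
      intro j; constructor
      · intro hj; apply Fin.ext; simp only [j0]; omega
      · intro hj; subst hj; simp only [j0]; omega
    rw [Finset.sum_congr rfl fun j _ => by rw [if_congr (this j) rfl rfl]]
    rw [Finset.sum_ite_eq' Finset.univ j0 (fun j => -(v j)), if_pos (Finset.mem_univ _)]
  · rw [if_neg h, neg_zero]
    refine Finset.sum_eq_zero fun j _ => if_neg ?_
    omega

lemma sin_rec (θ : ℝ) (m : ℕ) :
    Real.sin ((m : ℝ) * θ) + Real.sin (((m : ℝ) + 2) * θ)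
      = 2 * Real.cos θ * Real.sin (((m : ℝ) + 1) * θ) := by
  have h1 : (m : ℝ) * θ = ((m : ℝ) + 1) * θ - θ := by ring
  have h2 : ((m : ℝ) + 2) * θ = ((m : ℝ) + 1) * θ + θ := by ring
  rw [h1, h2, Real.sin_sub, Real.sin_add]
  ring

/-- Eigenvector computation, given the boundary identity. -/
lemma eig_eq {N : ℕ} (θ : ℝ) (hb : Real.sin (((N : ℝ) + 1) * θ) = Real.sin ((N : ℝ) * θ)) :
    (Bmat N * (Bmat N)ᵀ) *ᵥ (fun k : Fin N => Real.sin (((k : ℕ) + 1) * θ))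
      = (2 * (1 - Real.cos θ)) • (fun k : Fin N => Real.sin (((k : ℕ) + 1) * θ)) := by
  set v : Fin N → ℝ := fun k => Real.sin (((k : ℕ) + 1) * θ) with hv
  have hw : ∀ k : Fin N, ((Bmat N)ᵀ *ᵥ v) k
      = Real.sin (((k : ℕ) + 1) * θ) - Real.sin ((k : ℕ) * θ) := by
    intro k
    rw [Bmat_transpose_mulVec]
    by_cases h : 1 ≤ (k : ℕ)
    · rw [if_pos h]
      simp only [hv]
      congr 2
      push_cast
      have : ((k : ℕ) - 1 : ℕ) = ((k : ℕ) - 1 : ℕ) := rfl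
      have hk1 : (((k : ℕ) - 1 : ℕ) : ℝ) = (k : ℕ) - 1 := by
        have : 1 ≤ (k : ℕ) := h
        push_cast [Nat.cast_sub this]
        ring
      rw [hk1]; ring
    · rw [if_neg h]
      have hk0 : (((k : ℕ) : ℕ) : ℝ) = 0 := by
        have : (k : ℕ) = 0 := by omega
        exact_mod_cast congrArg (Nat.cast (R := ℝ)) this
      simp only [hv, hk0]
      simp
  funext k
  rw [← Matrix.mulVec_mulVec, Bmat_mulVec]
  simp only [Pi.smul_apply, smul_eq_mul]
  have key : ((Bmat N)ᵀ *ᵥ v) k -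
      (if h : (k : ℕ) + 1 < N then ((Bmat N)ᵀ *ᵥ v) ⟨(k : ℕ) + 1, h⟩ else 0)
      = 2 * Real.sin (((k : ℕ) + 1) * θ) - Real.sin ((k : ℕ) * θ)
        - Real.sin (((k : ℕ) + 2) * θ) := by
    rw [hw k]
    by_cases h : (k : ℕ) + 1 < N
    · rw [dif_pos h, hw]
      push_cast
      ring
    · rw [dif_neg h]
      -- here (k : ℕ) + 1 = N
      have hkN : (k : ℕ) + 1 = N := by have := k.isLt; omega
      have h1 : ((k : ℕ) + 1 : ℝ) = (N : ℝ) := by exact_mod_cast congrArg Nat.cast hkN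
      have h2 : ((k : ℕ) + 2 : ℝ) = (N : ℝ) + 1 := by
        rw [← h1]; ring
      rw [show ((k : ℕ) : ℝ) + 1 = ((k : ℕ) + 1 : ℝ) by ring] at *
      rw [h1]
      rw [show ((k : ℕ) : ℝ) + 2 = ((k : ℕ) + 2 : ℝ) by ring, h2, hb]
      ring
  rw [key]
  have := sin_rec θ (k : ℕ)
  simp only [hv]
  nlinarith [sin_rec θ (k : ℕ)]

/-- the eigenvalues of BBᵀ (pinned path-graph Laplacian) are exactly the N
numbers 2(1 − cos((2i−1)π/(2N+1))) = 4 sin²((2i−1)π/(4N+2)), i = 1,…,N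
(here indexed i = 0,…,N−1, with 2i−1 replaced by 2i+1). -/
theorem stmt_6 (N : ℕ) (hN : 1 ≤ N) :
    (∀ μ : ℝ,
      (∃ v : Fin N → ℝ, v ≠ 0 ∧ (Bmat N * (Bmat N)ᵀ) *ᵥ v = μ • v) ↔
      ∃ i : Fin N, μ = 2 * (1 - Real.cos ((2 * (i : ℕ) + 1) * Real.pi / (2 * N + 1)))) ∧
    (∀ i : Fin N,
      2 * (1 - Real.cos ((2 * (i : ℕ) + 1) * Real.pi / (2 * N + 1)))
        = 4 * Real.sin ((2 * (i : ℕ) + 1) * Real.pi / (4 * N + 2)) ^ 2) ∧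
    Function.Injective
      (fun i : Fin N => 2 * (1 - Real.cos ((2 * (i : ℕ) + 1) * Real.pi / (2 * N + 1)))) := by
  have hden : (0 : ℝ) < 2 * N + 1 := by positivity
  -- angles
  set θ : Fin N → ℝ := fun i => (2 * (i : ℕ) + 1) * Real.pi / (2 * N + 1) with hθ
  have hθpos : ∀ i : Fin N, 0 < θ i := by
    intro i
    apply div_pos _ hden
    positivity
  have hθlt : ∀ i : Fin N, θ i < Real.pi := by
    intro i
    rw [hθ, div_lt_iff₀ hden]
    have hi : ((i : ℕ) : ℝ) < (N : ℝ) := by exact_mod_cast i.isLt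
    nlinarith [Real.pi_pos]
  -- boundary identity
  have hbd : ∀ i : Fin N, Real.sin (((N : ℝ) + 1) * θ i) = Real.sin ((N : ℝ) * θ i) := by
    intro i
    have harg : ((N : ℝ) + 1) * θ i = ((2 * (i : ℕ) + 1 : ℤ) : ℝ) * Real.pi - (N : ℝ) * θ i := by
      rw [hθ]
      push_cast
      field_simp
      ring
    rw [harg, Real.sin_int_mul_pi_sub]
    have hodd : Odd ((2 * (i : ℕ) + 1 : ℤ)) := ⟨(i : ℤ), by ring⟩
    rw [hodd.neg_one_zpow]
    ring
  -- eigenvectors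
  have heig : ∀ i : Fin N, (Bmat N * (Bmat N)ᵀ) *ᵥ
      (fun k : Fin N => Real.sin (((k : ℕ) + 1) * θ i))
      = (2 * (1 - Real.cos (θ i))) • (fun k : Fin N => Real.sin (((k : ℕ) + 1) * θ i)) :=
    fun i => eig_eq (θ i) (hbd i)
  have hvne : ∀ i : Fin N, (fun k : Fin N => Real.sin (((k : ℕ) + 1) * θ i)) ≠ 0 := by
    intro i h
    have h0 := congrFun h ⟨0, hN⟩
    simp only [Pi.zero_apply] at h0
    have hsin : Real.sin (θ i) > 0 := Real.sin_pos_of_pos_of_lt_pi (hθpos i) (hθlt i)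
    rw [show ((((⟨0, hN⟩ : Fin N) : ℕ) : ℝ) + 1) * θ i = θ i by norm_num] at h0
    linarith
  -- injectivity of the eigenvalue map
  have hinj : Function.Injective
      (fun i : Fin N => 2 * (1 - Real.cos (θ i))) := by
    intro i j hij
    simp only at hij
    have hcos : Real.cos (θ i) = Real.cos (θ j) := by linarith
    have hθij : θ i = θ j :=
      Real.injOn_cos ⟨le_of_lt (hθpos i), le_of_lt (hθlt i)⟩
        ⟨le_of_lt (hθpos j), le_of_lt (hθlt j)⟩ hcos
    have hpi : Real.pi ≠ 0 := ne_of_gt Real.pi_pos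
    rw [hθ] at hθij
    simp only [div_eq_div_iff hden.ne' hden.ne'] at hθij
    have h2 : (2 * ((i : ℕ) : ℝ) + 1) * Real.pi = (2 * ((j : ℕ) : ℝ) + 1) * Real.pi :=
      mul_right_cancel₀ hden.ne' hθij
    have h3 : (2 * ((i : ℕ) : ℝ) + 1) = (2 * ((j : ℕ) : ℝ) + 1) :=
      mul_right_cancel₀ hpi h2
    have h4 : ((i : ℕ) : ℝ) = ((j : ℕ) : ℝ) := by linarith
    exact Fin.ext (Nat.cast_injective h4)
  refine ⟨?_, ?_, hinj⟩
  · intro μ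
    constructor
    · rintro ⟨v, hv0, hv⟩
      by_contra hcon
      push_neg at hcon
      -- μ differs from all eigenvalues μᵢ; get N+1 independent eigenvectors
      set f : Module.End ℝ (Fin N → ℝ) := Matrix.mulVecLin (Bmat N * (Bmat N)ᵀ) with hf
      set μs : Option (Fin N) → ℝ := fun o => o.elim μ (fun i => 2 * (1 - Real.cos (θ i)))
      set vs : Option (Fin N) → (Fin N → ℝ) :=
        fun o => o.elim v (fun i k => Real.sin (((k : ℕ) + 1) * θ i))
      have hμinj : Function.Injective μs := by
        intro a b hab
        match a, b with
        | none, none => rfl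
        | none, some j => exact absurd hab (hcon j)
        | some i, none => exact absurd hab.symm (hcon i)
        | some i, some j => exact congrArg some (hinj hab)
      
      have heigvec : ∀ o : Option (Fin N), f.HasEigenvector (μs o) (vs o) := by
        rintro (_ | i)
        · refine ⟨Module.End.mem_eigenspace_iff.mpr ?_, hv0⟩
          show (Bmat N * (Bmat N)ᵀ).mulVecLin v = μ • v
          rw [Matrix.mulVecLin_apply]
          exact hv
        · refine ⟨Module.End.mem_eigenspace_iff.mpr ?_, hvne i⟩
          show (Bmat N * (Bmat N)ᵀ).mulVecLin (fun k : Fin N => Real.sin (((k : ℕ) + 1) * θ i))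
            = (2 * (1 - Real.cos (θ i))) • (fun k : Fin N => Real.sin (((k : ℕ) + 1) * θ i))
          rw [Matrix.mulVecLin_apply]
          exact heig i
      have hli : LinearIndependent ℝ vs :=
        f.eigenvectors_linearIndependent' μs hμinj vs heigvec
      have hcard := hli.fintype_card_le_finrank
      rw [Module.finrank_fintype_fun_eq_card] at hcard
      simp [Fintype.card_option] at hcard
    · rintro ⟨i, rfl⟩
      exact ⟨_, hvne i, heig i⟩
  · intro i
    have h2N1 : ((2 : ℝ) * N + 1) ≠ 0 := ne_of_gt hden
    have harg : (2 * (i : ℕ) + 1) * Real.pi / (2 * N + 1)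
        = 2 * ((2 * (i : ℕ) + 1) * Real.pi / (4 * N + 2)) := by
      have h4 : ((4 : ℝ) * N + 2) = 2 * (2 * N + 1) := by ring
      rw [h4]
      field_simp
    rw [harg, Real.cos_two_mul]
    nlinarith [Real.sin_sq_add_cos_sq ((2 * (i : ℕ) + 1) * Real.pi / (4 * N + 2))]
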